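/- Suppose n ≥ 3 and k = pn + 1 for some p ≥ 1, and suppose the optimal (n+1)-visit PMP-D walk WD*(n+1) visits each target exactly once. If the depot can be shortcut from WD*(n+1) to obtain an n-visit target-only cycle W_SD, then the k-visit walk obtained by concatenating (a rotation of) WD*(n+1) with p−1 copies of W_SD is a feasible PMP-D walk with k visits whose revisit time equals RD*(n+1); hence RD*(pn+1) = RD*(n+1). -/

import Mathlib

/-- Total cost of consecutive steps of a finite sequence of vertices. -/
def chainCost {V : Type*} (c : V → V → ℝ) : List V → ℝ
  | [] => 0
  | [_] => 0
  | x :: y :: t => c x y + chainCost c (y :: t)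

/-- A depot-free spanning revisit sequence with `v` visits, written as a list
`(u_0, ..., u_{v-1}, u_0)`: length `v+1`, cyclically closed, consecutive elements
distinct, all elements targets, covering all targets. -/
def IsRevSeqND {V : Type*} (N : Finset V) (v : ℕ) (l : List V) : Prop :=
  l.length = v + 1 ∧ l.head? = l.getLast? ∧ l.Chain' (· ≠ ·) ∧
    (∀ x ∈ l, x ∈ N) ∧ (∀ t ∈ N, t ∈ l)

/-- A depot-containing spanning revisit sequence with `v` visits, written as a list
`(u_0, ..., u_{v-1}, u_0)`: starts and ends at the same target, consecutive elements
distinct, elements in `N ∪ {d}`, covering all targets, depot appearing exactly once. -/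
def IsRevSeqD {V : Type*} [DecidableEq V] (N : Finset V) (d : V) (v : ℕ) (l : List V) : Prop :=
  l.length = v + 1 ∧ l.head? = l.getLast? ∧ l.Chain' (· ≠ ·) ∧
    (∀ x ∈ l, x ∈ N ∨ x = d) ∧ (∀ t ∈ N, t ∈ l) ∧ l.count d = 1 ∧
    (∃ u ∈ N, l.head? = some u)
/-- Cost of the stretch of the (periodically extended) walk `f` from index `i` to `j`. -/
noncomputable def segCost {V : Type*} (c : V → V → ℝ) (f : ℕ → V) (i j : ℕ) : ℝ :=
  ∑ m ∈ Finset.range (j - i), c (f (i + m)) (f (i + m + 1))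

/-- Indices `i < j` are consecutive occurrences of the terminus `f i` in the walk `f`. -/
def IsRevisit {V : Type*} (f : ℕ → V) (i j : ℕ) : Prop :=
  i < j ∧ f j = f i ∧ ∀ m, i < m → m < j → f m ≠ f i

/-- The stretch of `f` from `i` to `j` visits every target in `N`. -/
def Spans {V : Type*} (N : Finset V) (f : ℕ → V) (i j : ℕ) : Prop :=
  ∀ t ∈ N, ∃ m, i ≤ m ∧ m ≤ j ∧ f m = t

/-- The stretch of `f` from `i` to `j` visits the depot. -/
def HasDepot {V : Type*} (dV : V) (f : ℕ → V) (i j : ℕ) : Prop :=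
  ∃ m, i ≤ m ∧ m ≤ j ∧ f m = dV

/-- The set of travel times of all spanning revisit sequences (with a target terminus,
starting within one period `p`) of the periodic walk `f`. The revisit time of the walk
is the greatest element of this set. -/
def revCosts {V : Type*} (c : V → V → ℝ) (N : Finset V) (p : ℕ) (f : ℕ → V) : Set ℝ :=
  {x | ∃ i j, i < p ∧ f i ∈ N ∧ IsRevisit f i j ∧ Spans N f i j ∧ x = segCost c f i j}

/-- A PMP walk with `v` visits, modelled as its periodic extension: period `v`,
consecutive visits distinct, all visits are targets, every target visited in a period. -/
def IsPMPWalkFun {V : Type*} (N : Finset V) (v : ℕ) (f : ℕ → V) : Prop :=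
  (∀ i, f (i + v) = f i) ∧ (∀ i, f i ≠ f (i + 1)) ∧
    (∀ i, f i ∈ N) ∧ (∀ t ∈ N, ∃ i, i < v ∧ f i = t)

/-- A PMP-D walk with `k` visits, modelled as its periodic extension: period `k`,
starts at the depot, the depot is visited exactly once per period, consecutive visits
distinct, visits in `N ∪ {d}`, every target visited in a period. -/
def IsPMPDWalkFun {V : Type*} (N : Finset V) (dV : V) (k : ℕ) (f : ℕ → V) : Prop :=
  (∀ i, f (i + k) = f i) ∧ (∀ i, f i ≠ f (i + 1)) ∧
    (∀ i, f i = dV ↔ k ∣ i) ∧ (∀ i, f i ∈ N ∨ f i = dV) ∧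
    (∀ t ∈ N, ∃ i, i < k ∧ f i = t)

/-- The set of revisit times of PMP-D walks with `m` visits; `RD*(m)` is its least element. -/
def pmpdRevTimes {V : Type*} (c : V → V → ℝ) (N : Finset V) (dV : V) (m : ℕ) : Set ℝ :=
  {r | ∃ f : ℕ → V, IsPMPDWalkFun N dV m f ∧ IsGreatest (revCosts c N m f) r}

/-- The set of revisit times of PMP walks with `m` visits; `R*(m)` is its least element. -/
def pmpRevTimes {V : Type*} (c : V → V → ℝ) (N : Finset V) (m : ℕ) : Set ℝ :=
  {r | ∃ f : ℕ → V, IsPMPWalkFun N m f ∧ IsGreatest (revCosts c N m f) r}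


namespace PMPaux
variable {V : Type*} (c : V → V → ℝ)

lemma segCost_succ (f : ℕ → V) {i j : ℕ} (h : i ≤ j) :
    segCost c f i (j + 1) = segCost c f i j + c (f j) (f (j + 1)) := by
  unfold segCost
  rw [show j + 1 - i = (j - i) + 1 by omega, Finset.sum_range_succ,
    show i + (j - i) = j by omega]

lemma segCost_add (f : ℕ → V) {i j l : ℕ} (hij : i ≤ j) (hjl : j ≤ l) :
    segCost c f i l = segCost c f i j + segCost c f j l := by
  unfold segCost
  rw [show l - i = (j - i) + (l - j) by omega, Finset.sum_range_add]
  congr 1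
  refine Finset.sum_congr rfl fun m _ => ?_
  rw [show i + (j - i + m) = j + m by omega]

lemma le_segCost (htri : ∀ x y z, c x z ≤ c x y + c y z) (f : ℕ → V) {i j : ℕ} (h : i < j) :
    c (f i) (f j) ≤ segCost c f i j := by
  obtain ⟨m, rfl⟩ : ∃ m, j = i + m + 1 := ⟨j - i - 1, by omega⟩
  clear h
  induction m with
  | zero => unfold segCost; simp
  | succ m ih =>
      have h1 := htri (f i) (f (i + m + 1)) (f (i + m + 1 + 1))
      have h2 : segCost c f i (i + m + 1 + 1)
          = segCost c f i (i + m + 1) + c (f (i + m + 1)) (f (i + m + 1 + 1)) :=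
        segCost_succ c f (by omega)
      have := add_le_add_left ih (c (f (i + m + 1)) (f (i + m + 1 + 1)))
      calc c (f i) (f (i + (m + 1) + 1)) = c (f i) (f (i + m + 1 + 1)) := by ring_nf
        _ ≤ c (f i) (f (i + m + 1)) + c (f (i + m + 1)) (f (i + m + 1 + 1)) := h1
        _ ≤ segCost c f i (i + m + 1) + c (f (i + m + 1)) (f (i + m + 1 + 1)) := this
        _ = segCost c f i (i + m + 1 + 1) := h2.symm

lemma segCost_shift {P : ℕ} (f : ℕ → V) (hper : ∀ i, f (i + P) = f i) (i : ℕ) :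
    segCost c f i (i + P) = segCost c f 0 P := by
  set a : ℕ → ℝ := fun j => c (f j) (f (j + 1)) with ha
  have haper : ∀ j, a (j + P) = a j := by
    intro j
    simp only [ha]
    rw [show j + P + 1 = (j + 1) + P by omega, hper, hper]
  have main : ∀ i, ∑ m ∈ Finset.range P, a (i + m) = ∑ m ∈ Finset.range P, a m := by
    intro i
    induction i with
    | zero => simp only [Nat.zero_add]
    | succ i ih =>
        have h1 : ∑ m ∈ Finset.range (P + 1), a (i + m)
            = ∑ m ∈ Finset.range P, a (i + (m + 1)) + a (i + 0) := Finset.sum_range_succ' _ _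
        have h2 : ∑ m ∈ Finset.range (P + 1), a (i + m)
            = ∑ m ∈ Finset.range P, a (i + m) + a (i + P) := Finset.sum_range_succ _ _
        have h3 : a (i + P) = a (i + 0) := by rw [haper]; simp
        have h4 : ∀ m, a (i + (m + 1)) = a (i + 1 + m) := fun m => by rw [show i + (m+1) = i + 1 + m from by omega]
        simp only [h4] at h1
        have h5 := h1.symm.trans h2
        rw [h3] at h5
        have h6 := add_right_cancel h5
        rw [h6, ih]
  show ∑ m ∈ Finset.range (i + P - i), c (f (i + m)) (f (i + m + 1))
      = ∑ m ∈ Finset.range (P - 0), c (f (0 + m)) (f (0 + m + 1))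
  simp only [show i + P - i = P by omega, Nat.sub_zero, Nat.zero_add]
  exact main i

lemma chain_le (htri : ∀ x y z, c x z ≤ c x y + c y z) (f : ℕ → V) (φ : ℕ → ℕ) :
    ∀ q, (∀ s, s < q → φ s < φ (s + 1)) →
      ∑ s ∈ Finset.range q, c (f (φ s)) (f (φ (s + 1))) ≤ segCost c f (φ 0) (φ q) := by
  intro q
  induction q with
  | zero => intro _; simp [segCost]
  | succ q ih =>
      intro hmono
      have hmono' : ∀ s, s < q → φ s < φ (s + 1) := fun s hs => hmono s (by omega)
      have hle : φ 0 ≤ φ q := by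
        clear ih
        induction q with
        | zero => exact le_rfl
        | succ q ih2 =>
            exact le_trans (ih2 (fun s hs => hmono s (by omega)) (fun s hs => hmono' s (by omega)))
              (le_of_lt (hmono' q (by omega)))
      rw [Finset.sum_range_succ,
        segCost_add c f hle (le_of_lt (hmono q (by omega)))]
      exact add_le_add (ih hmono') (le_segCost c htri f (hmono q (by omega)))

lemma periodic_mod {P : ℕ} (f : ℕ → V) (hper : ∀ i, f (i + P) = f i) (hP : 0 < P) (m : ℕ) :
    f m = f (m % P) := by
  conv_lhs => rw [show m = m % P + P * (m / P) from by rw [Nat.mod_add_div]]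
  generalize m / P = q
  induction q with
  | zero => simp
  | succ q ih =>
      rw [show m % P + P * (q + 1) = (m % P + P * q) + P from by ring, hper, ih]

/-- In a depot walk visiting each target exactly once per period, occurrences of a
target are congruent mod the period. -/
lemma once_cong {N : Finset V} {dV : V} {n : ℕ} {f : ℕ → V}
    (hw : IsPMPDWalkFun N dV (n + 1) f)
    (honce : ∀ t ∈ N, ∃! i, i < n + 1 ∧ f i = t)
    {a b : ℕ} (hab : f a = f b) (hN : f a ∈ N) : a % (n + 1) = b % (n + 1) := by
  obtain ⟨hper, h2, h3, h4, h5⟩ := hw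
  have hma : f a = f (a % (n + 1)) := periodic_mod f hper (by omega) a
  have hmb : f b = f (b % (n + 1)) := periodic_mod f hper (by omega) b
  obtain ⟨i, hi, hiu⟩ := honce (f a) hN
  have h1 : a % (n + 1) = i := hiu _ ⟨Nat.mod_lt _ (by omega), hma.symm⟩
  have h2 : b % (n + 1) = i := hiu _ ⟨Nat.mod_lt _ (by omega), (hmb.symm.trans hab.symm)⟩
  omega

/-- Revisit-time identification for simple depot walks (each target once per period):
the greatest spanning-revisit cost is the full period cost. -/
lemma simple_greatest {N : Finset V} {dV : V} (hd : dV ∉ N) {n : ℕ} (hn : 0 < n)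
    {f : ℕ → V}
    (hw : IsPMPDWalkFun N dV (n + 1) f)
    (honce : ∀ t ∈ N, ∃! i, i < n + 1 ∧ f i = t) :
    IsGreatest (revCosts c N (n + 1) f) (segCost c f 0 (n + 1)) := by
  obtain ⟨hper, hstep, hdep, hmem, hcov⟩ := hw
  have hf1N : f 1 ∈ N := by
    rcases hmem 1 with h | h
    · exact h
    · exfalso
      have h2 := (hdep 1).1 h
      have := Nat.le_of_dvd (by omega) h2
      omega
  constructor
  · -- membership: revisit (1, 1 + (n+1))
    refine ⟨1, 1 + (n + 1), by omega, hf1N, ⟨by omega, hper 1, ?_⟩, ?_, ?_⟩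
    · intro m hm1 hm2 hcon
      have h1 : m % (n + 1) = 1 % (n + 1) :=
        once_cong ⟨hper, hstep, hdep, hmem, hcov⟩ honce hcon
          (by rw [hcon]; exact hf1N)
      rw [Nat.one_mod_eq_one.mpr (by omega)] at h1
      rcases Nat.lt_or_ge m (n + 1) with h | h
      · rw [Nat.mod_eq_of_lt h] at h1; omega
      · have hm : m = n + 1 := by omega
        rw [hm, Nat.mod_self] at h1; omega
    · intro t ht
      obtain ⟨i, hi, hfi⟩ := hcov t ht
      have hi1 : 1 ≤ i := by
        rcases Nat.eq_zero_or_pos i with rfl | h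
        · exfalso
          have hz : f 0 = dV := (hdep 0).2 ⟨0, rfl⟩
          rw [hz] at hfi
          exact hd (hfi ▸ ht)
        · exact h
      exact ⟨i, hi1, by omega, hfi⟩
    · exact (segCost_shift c f hper 1).symm
  · -- upper bound
    rintro x ⟨i, j, hip, hiN, ⟨hij, hji, hrev⟩, hspan, rfl⟩
    have hcong := once_cong ⟨hper, hstep, hdep, hmem, hcov⟩ honce hji (hji ▸ hiN)
    have hdvd : (n + 1) ∣ (j - i) := by
      apply Nat.dvd_of_mod_eq_zero
      exact Nat.sub_mod_eq_zero_of_mod_eq hcong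
    obtain ⟨q, hq⟩ := hdvd
    have hq' : j = i + (n + 1) * q := by omega
    have hqeq : q = 1 := by
      by_contra hq2
      have hq1 : 1 ≤ q := by
        rcases Nat.eq_zero_or_pos q with rfl | h
        · omega
        · exact h
      have h2 : (n + 1) * 2 ≤ (n + 1) * q := Nat.mul_le_mul_left _ (by omega)
      exact hrev (i + (n + 1)) (by omega) (by omega) (hper i)
    have hj : j = i + (n + 1) := by rw [hq', hqeq, Nat.mul_one]
    rw [hj, segCost_shift c f hper i]
/-- From any PMP-D walk with `k ≥ n+1` visits one can extract a simple `(n+1)`-visit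
PMP-D walk whose period cost is at most the revisit time of the big walk. -/
lemma exists_small_walk {N : Finset V} {dV : V} (hd : dV ∉ N) {n : ℕ} (hn : 1 ≤ n)
    (hcard : N.card = n) (htri : ∀ x y z, c x z ≤ c x y + c y z)
    {k : ℕ} (hk : n + 1 ≤ k) {g : ℕ → V} (hw : IsPMPDWalkFun N dV k g) {r : ℝ}
    (hG : IsGreatest (revCosts c N k g) r) :
    ∃ h : ℕ → V, IsPMPDWalkFun N dV (n + 1) h ∧
      (∀ t ∈ N, ∃! i, i < n + 1 ∧ h i = t) ∧ segCost c h 0 (n + 1) ≤ r := by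
  classical
  obtain ⟨gper, gstep, gdep, gmem, gcov⟩ := hw
  have hk1 : 1 ≤ k := by omega
  have hg0 : g 0 = dV := (gdep 0).2 ⟨0, rfl⟩
  have hgk : g k = dV := (gdep k).2 ⟨1, (Nat.mul_one k).symm⟩
  -- last occurrence of each target within (0, k)
  set a : V → ℕ := fun t => Nat.findGreatest (fun m => g m = t) (k - 1) with ha
  have haspec : ∀ t ∈ N, g (a t) = t := by
    intro t ht
    obtain ⟨i, hik, hgi⟩ := gcov t ht
    have hi1 : i ≤ k - 1 := by omega
    exact Nat.findGreatest_spec (P := fun m => g m = t) hi1 hgi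
  have hapos : ∀ t ∈ N, 1 ≤ a t := by
    intro t ht
    by_contra hcon
    have h0 : a t = 0 := by omega
    have := haspec t ht
    rw [h0, hg0] at this
    exact hd (this ▸ ht)
  have hak : ∀ t ∈ N, a t ≤ k - 1 := by
    intro t ht
    show Nat.findGreatest (fun m => g m = t) (k - 1) ≤ k - 1
    exact Nat.findGreatest_le _
  have hamax : ∀ t ∈ N, ∀ m, a t < m → m ≤ k - 1 → g m ≠ t := by
    intro t ht m h1 h2
    exact Nat.findGreatest_is_greatest h1 h2
  have hainj : ∀ t ∈ N, ∀ t' ∈ N, a t = a t' → t = t' := by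
    intro t ht t' ht' he
    rw [← haspec t ht, ← haspec t' ht', he]
  -- N is nonempty
  have hNne : N.Nonempty := Finset.card_pos.mp (by omega)
  set I : Finset ℕ := N.image a with hI
  have hIne : I.Nonempty := hNne.image a
  set A : ℕ := I.min' hIne with hA
  obtain ⟨tstar, htstar, hatstar⟩ := Finset.mem_image.mp (I.min'_mem hIne)
  have hAle : ∀ t ∈ N, A ≤ a t := fun t ht => I.min'_le _ (Finset.mem_image_of_mem a ht)
  have hA1 : 1 ≤ A := by rw [hA, ← hatstar]; exact hapos tstar htstar
  have hAk : A ≤ k - 1 := by rw [hA, ← hatstar]; exact hak tstar htstar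
  have hgA : g A = tstar := by rw [hA, ← hatstar]; exact haspec tstar htstar
  -- first occurrence of tstar after k
  have hBex : ∃ m, k < m ∧ g m = tstar := ⟨A + k, by omega, by rw [gper]; exact hgA⟩
  set B : ℕ := Nat.find hBex with hB
  obtain ⟨hkB, hgB⟩ := Nat.find_spec hBex
  have hBmin : ∀ m, k < m → m < B → g m ≠ tstar := by
    intro m h1 h2 hcon
    exact Nat.find_min hBex h2 ⟨h1, hcon⟩
  -- (A, B) is a spanning revisit of g
  have hrevAB : IsRevisit g A B := by
    refine ⟨by omega, by rw [hgB, hgA], ?_⟩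
    intro m h1 h2 hcon
    rw [hgA] at hcon
    rcases Nat.lt_or_ge m (k + 1) with h | h
    · rcases Nat.lt_or_ge m k with h' | h'
      · exact hamax tstar htstar m (hatstar ▸ h1) (by omega) hcon
      · have hmk : m = k := by omega
        rw [hmk, hgk] at hcon
        exact hd (hcon ▸ htstar)
    · exact hBmin m (by omega) h2 hcon
  have hspanAB : Spans N g A B := by
    intro t ht
    exact ⟨a t, hAle t ht, by have := hak t ht; omega, haspec t ht⟩
  have hx0 : segCost c g A B ∈ revCosts c N k g :=
    ⟨A, B, by omega, hgA ▸ htstar, hrevAB, hspanAB, rfl⟩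
  have hx0r : segCost c g A B ≤ r := hG.2 hx0
  -- enumeration of I in increasing order
  have hIcard : I.card = n := by
    rw [hI, Finset.card_image_of_injOn (fun t ht t' ht' he => hainj t ht t' ht' he), hcard]
  set idx : Fin n ≃o {x // x ∈ I} := I.orderIsoOfFin hIcard with hidx
  set e : ℕ → ℕ := fun s => if hs : s < n then (idx ⟨s, hs⟩ : ℕ) else 0 with he
  have heI : ∀ s, s < n → e s ∈ I := by
    intro s hs
    simp only [he, dif_pos hs]
    exact (idx ⟨s, hs⟩).2
  have hemono : ∀ s s', s < s' → s' < n → e s < e s' := by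
    intro s s' h1 h2
    simp only [he, dif_pos h2, dif_pos (lt_trans h1 h2)]
    exact_mod_cast idx.strictMono (show (⟨s, lt_trans h1 h2⟩ : Fin n) < ⟨s', h2⟩ from h1)
  have hgeN : ∀ s, s < n → g (e s) ∈ N ∧ a (g (e s)) = e s := by
    intro s hs
    obtain ⟨t, ht, hat⟩ := Finset.mem_image.mp (heI s hs)
    have hgt : g (e s) = t := by rw [← hat, haspec t ht]
    refine ⟨by rw [hgt]; exact ht, by rw [hgt, hat]⟩
  have heinj : ∀ s s', s < n → s' < n → g (e s) = g (e s') → s = s' := by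
    intro s s' hs hs' hgg
    have h1 : e s = e s' := by
      rw [← (hgeN s hs).2, ← (hgeN s' hs').2, hgg]
    rcases lt_trichotomy s s' with h | h | h
    · exact absurd h1 (Nat.ne_of_lt (hemono s s' h hs'))
    · exact h
    · exact absurd h1.symm (Nat.ne_of_lt (hemono s' s h hs))
  have hesurj : ∀ t ∈ N, ∃ s, s < n ∧ g (e s) = t := by
    intro t ht
    set J : Finset V := (Finset.range n).image (fun s => g (e s)) with hJ
    have hJsub : J ⊆ N := by
      intro x hx
      obtain ⟨s, hs, rfl⟩ := Finset.mem_image.mp hx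
      exact (hgeN s (Finset.mem_range.mp hs)).1
    have hJcard : J.card = n := by
      rw [hJ, Finset.card_image_of_injOn, Finset.card_range]
      intro s hs s' hs' hgg
      exact heinj s s' (Finset.mem_range.mp hs) (Finset.mem_range.mp hs') hgg
    have hJN : J = N := Finset.eq_of_subset_of_card_le hJsub (by omega)
    obtain ⟨s, hs, hgs⟩ := Finset.mem_image.mp (hJN ▸ ht)
    exact ⟨s, Finset.mem_range.mp hs, hgs⟩
  have helt : ∀ s, s < n → e s < k := by
    intro s hs
    obtain ⟨t, ht, hat⟩ := Finset.mem_image.mp (heI s hs)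
    have := hak t ht
    omega
  have he0 : e 0 = A := by
    have h1 : A ≤ e 0 := I.min'_le _ (heI 0 (by omega))
    obtain ⟨t0, ht0, hat0⟩ := Finset.mem_image.mp (I.min'_mem hIne)
    have hAI : (A : ℕ) ∈ I := hA ▸ I.min'_mem hIne
    obtain ⟨j0, hj0⟩ : ∃ j0 : Fin n, (idx j0 : ℕ) = A := ⟨idx.symm ⟨A, hAI⟩, by simp⟩
    have h2 : e 0 ≤ A := by
      rcases Nat.eq_zero_or_pos (j0 : ℕ) with hz | hz
      · have : j0 = (⟨0, by omega⟩ : Fin n) := Fin.ext hz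
        rw [← hj0, this]
        simp only [he, dif_pos (show 0 < n by omega)]
        exact le_rfl
      · have := hemono 0 (j0 : ℕ) hz j0.2
        have hej0 : e (j0 : ℕ) = A := by
          simp only [he, dif_pos j0.2]
          rw [← hj0]
        omega
    omega
  -- the small walk
  set h : ℕ → V := fun m => if m % (n + 1) = 0 then dV else g (e (m % (n + 1) - 1)) with hh
  have hmodlt : ∀ m : ℕ, m % (n + 1) < n + 1 := fun m => Nat.mod_lt _ (by omega)
  have hval : ∀ m, m % (n + 1) ≠ 0 → h m = g (e (m % (n + 1) - 1)) := by
    intro m hm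
    simp only [hh, if_neg hm]
  have hvalN : ∀ m, m % (n + 1) ≠ 0 → h m ∈ N := by
    intro m hm
    rw [hval m hm]
    exact (hgeN _ (by have := hmodlt m; omega)).1
  have hval0 : ∀ m, m % (n + 1) = 0 → h m = dV := by
    intro m hm
    simp only [hh, if_pos hm]
  have hper : ∀ m, h (m + (n + 1)) = h m := by
    intro m
    simp only [hh, Nat.add_mod_right]
  have hwalk : IsPMPDWalkFun N dV (n + 1) h := by
    refine ⟨hper, ?_, ?_, ?_, ?_⟩
    · intro m
      have hsucc : (m + 1) % (n + 1) = (m % (n + 1) + 1) % (n + 1) := by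
        rw [Nat.add_mod]
        norm_num
      rcases Nat.eq_zero_or_pos (m % (n + 1)) with h0 | h0
      · have h1 : (m + 1) % (n + 1) = 1 := by
          rw [hsucc, h0]
          exact Nat.mod_eq_of_lt (by omega)
        rw [hval0 m h0, hval (m + 1) (by omega)]
        intro hcon
        exact hd (hcon ▸ (hgeN _ (by rw [h1]; omega)).1)
      · rcases Nat.lt_or_ge (m % (n + 1)) n with hlt | hge
        · have h1 : (m + 1) % (n + 1) = m % (n + 1) + 1 := by
            rw [hsucc]
            exact Nat.mod_eq_of_lt (by omega)
          rw [hval m (by omega), hval (m + 1) (by rw [h1]; omega)]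
          intro hcon
          have := heinj _ _ (by omega) (by rw [h1]; omega) hcon
          omega
        · have hmn : m % (n + 1) = n := by have := hmodlt m; omega
          have h1 : (m + 1) % (n + 1) = 0 := by
            rw [hsucc, hmn, Nat.mod_self]
          rw [hval m (by omega), hval0 (m + 1) h1]
          intro hcon
          exact hd (hcon ▸ (hgeN _ (by omega)).1)
    · intro m
      constructor
      · intro hm
        by_contra hnd
        have h0 : m % (n + 1) ≠ 0 := fun h => hnd (Nat.dvd_of_mod_eq_zero h)
        exact hd (hm ▸ hvalN m h0)
      · intro hdvd
        obtain ⟨q, rfl⟩ := hdvd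
        exact hval0 _ (Nat.mul_mod_right _ _)
    · intro m
      rcases Nat.eq_zero_or_pos (m % (n + 1)) with h0 | h0
      · exact Or.inr (hval0 m h0)
      · exact Or.inl (hvalN m (by omega))
    · intro t ht
      obtain ⟨s, hs, hgs⟩ := hesurj t ht
      refine ⟨s + 1, by omega, ?_⟩
      have h1 : (s + 1) % (n + 1) = s + 1 := Nat.mod_eq_of_lt (by omega)
      rw [hval (s + 1) (by omega), h1]
      simpa using hgs
  have honce : ∀ t ∈ N, ∃! i, i < n + 1 ∧ h i = t := by
    intro t ht
    obtain ⟨s, hs, hgs⟩ := hesurj t ht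
    have hmods : (s + 1) % (n + 1) = s + 1 := Nat.mod_eq_of_lt (by omega)
    refine ⟨s + 1, ⟨by omega, ?_⟩, ?_⟩
    · rw [hval (s + 1) (by omega), hmods]
      simpa using hgs
    · rintro i ⟨hi, hhi⟩
      rcases Nat.eq_zero_or_pos i with rfl | hipos
      · exfalso
        rw [hval0 0 (by simp)] at hhi
        exact hd (hhi ▸ ht)
      · have hmod : i % (n + 1) = i := Nat.mod_eq_of_lt hi
        rw [hval i (by omega), hmod] at hhi
        have := heinj (i - 1) s (by omega) hs (by rw [hhi, hgs])
        omega
  refine ⟨h, hwalk, honce, ?_⟩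
  -- bound the period cost by segCost g A B via the chain lemma
  set φ : ℕ → ℕ := fun s => if s < n then e s else if s = n then k else B with hφ
  have hφmono : ∀ s, s < n + 1 → φ s < φ (s + 1) := by
    intro s hs
    rcases Nat.lt_or_ge (s + 1) n with h1 | h1
    · simp only [hφ, if_pos h1, if_pos (show s < n by omega)]
      exact hemono s (s + 1) (by omega) h1
    · rcases Nat.lt_or_ge s n with h2 | h2
      · have hsn : s + 1 = n := by omega
        simp only [hφ, if_pos h2, if_neg (show ¬ s + 1 < n by omega), if_pos hsn]
        exact helt s h2
      · have hsn : s = n := by omega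
        simp only [hφ, if_neg (show ¬ s < n by omega), if_pos hsn,
          if_neg (show ¬ s + 1 < n by omega), if_neg (show ¬ s + 1 = n by omega)]
        omega
  have hchain := chain_le c htri g φ (n + 1) hφmono
  have hφ0 : φ 0 = A := by
    simp only [hφ, if_pos (show 0 < n by omega)]
    exact he0
  have hφn1 : φ (n + 1) = B := by
    simp only [hφ, if_neg (show ¬ n + 1 < n by omega), if_neg (show ¬ n + 1 = n by omega)]
  rw [hφ0, hφn1] at hchain
  -- identify the chain sum with segCost h 0 (n+1)
  have hTh : segCost c h 0 (n + 1) = ∑ s ∈ Finset.range (n + 1), c (g (φ s)) (g (φ (s + 1))) := by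
    have hhval : ∀ m, 1 ≤ m → m ≤ n → h m = g (e (m - 1)) := by
      intro m h1 h2
      have hm : m % (n + 1) = m := Nat.mod_eq_of_lt (by omega)
      rw [hval m (by rw [hm]; omega), hm]
    have hu : ∀ s, s < n → c (g (φ s)) (g (φ (s + 1))) = c (h (s + 1)) (h (s + 1 + 1)) := by
      intro s hs
      have hφs : φ s = e s := by simp only [hφ, if_pos hs]
      rcases Nat.lt_or_ge (s + 1) n with h1 | h1
      · have hφs1 : φ (s + 1) = e (s + 1) := by simp only [hφ, if_pos h1]
        rw [hφs, hφs1, hhval (s + 1) (by omega) (by omega),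
          hhval (s + 1 + 1) (by omega) (by omega)]
        norm_num
      · have hsn : s + 1 = n := by omega
        have hφs1 : φ (s + 1) = k := by simp [hφ, hsn]
        have hz : (s + 1 + 1) % (n + 1) = 0 := by rw [hsn]; exact Nat.mod_self _
        rw [hφs, hφs1, hgk, hhval (s + 1) (by omega) (by omega), hval0 (s + 1 + 1) hz]
        norm_num
    have hun : c (g (φ n)) (g (φ (n + 1))) = c (h 0) (h (0 + 1)) := by
      have hφn : φ n = k := by simp [hφ]
      have hgφ1 : g (φ (n + 1)) = g (e 0) := by
        rw [hφn1, hgB, ← hgA, ← he0]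
      have hh1 : h (0 + 1) = g (e 0) := by
        rw [hhval 1 le_rfl (by omega)]
      rw [hφn, hgk, hgφ1, hh1, hval0 0 rfl]
    calc segCost c h 0 (n + 1)
        = ∑ m ∈ Finset.range (n + 1), c (h m) (h (m + 1)) := by
          unfold segCost
          simp only [Nat.sub_zero, Nat.zero_add]
      _ = (∑ s ∈ Finset.range n, c (h (s + 1)) (h (s + 1 + 1))) + c (h 0) (h (0 + 1)) :=
          Finset.sum_range_succ' _ n
      _ = (∑ s ∈ Finset.range n, c (g (φ s)) (g (φ (s + 1)))) + c (g (φ n)) (g (φ (n + 1))) := by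
          rw [hun]
          congr 1
          exact Finset.sum_congr rfl fun s hs => (hu s (Finset.mem_range.mp hs)).symm
      _ = ∑ s ∈ Finset.range (n + 1), c (g (φ s)) (g (φ (s + 1))) :=
          (Finset.sum_range_succ _ n).symm
  rw [hTh]
  exact le_trans hchain hx0r
end PMPaux



/-- Theorem 2 of the paper: for `k = pn+1`, if the optimal
`(n+1)`-visit PMP-D walk `WD*(n+1)` visits each target exactly once and its depot can
be shortcut (the targets adjacent to the depot differ), then the walk obtained by
concatenating (a rotation of) `WD*(n+1)` with `p−1` copies of its depot-shortcut
`n`-cycle — i.e. the walk `(d, u_1, ..., u_n, u_1, ..., u_n, ..., u_1, ..., u_n, d)` —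
is a feasible PMP-D walk with `k` visits whose revisit time equals `RD*(n+1)`; hence
`RD*(pn+1) = RD*(n+1)`. -/
theorem O1_optimal {V : Type*} [DecidableEq V]
    (c : V → V → ℝ) (N : Finset V) (dV : V) (hd : dV ∉ N) (hn : 3 ≤ N.card)
    (hsymm : ∀ x y, c x y = c y x) (hnonneg : ∀ x y, 0 ≤ c x y)
    (htri : ∀ x y z, c x z ≤ c x y + c y z)
    (p k : ℕ) (hp : 1 ≤ p) (hk : k = p * N.card + 1)
    (RD : ℕ → ℝ)
    (hRDk : IsLeast (pmpdRevTimes c N dV k) (RD k))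
    (hRD1 : IsLeast (pmpdRevTimes c N dV (N.card + 1)) (RD (N.card + 1)))
    (f₁ : ℕ → V) (hf₁ : IsPMPDWalkFun N dV (N.card + 1) f₁)
    (hopt : IsGreatest (revCosts c N (N.card + 1) f₁) (RD (N.card + 1)))
    (honce : ∀ t ∈ N, ∃! i, i < N.card + 1 ∧ f₁ i = t)
    (hshort : f₁ 1 ≠ f₁ N.card) :
    (∃ f : ℕ → V,
      (∀ i, 1 ≤ i → i ≤ k - 1 → f i = f₁ ((i - 1) % N.card + 1)) ∧
      IsPMPDWalkFun N dV k f ∧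
      IsGreatest (revCosts c N k f) (RD (N.card + 1))) ∧
    RD k = RD (N.card + 1) := by

  classical
  obtain ⟨per₁, step₁, dep₁, mem₁, cov₁⟩ := id hf₁
  set n := N.card with hncard
  have hn3 : 3 ≤ n := hn
  have hnp : n ≤ p * n := Nat.le_mul_of_pos_left n (by omega)
  have hlink : (p - 1) * n + n = p * n := by
    cases p with
    | zero => omega
    | succ q => simp only [Nat.succ_sub_one, Nat.succ_mul]
  set q0 := (p - 1) * n with hq0
  have hkq : k = q0 + n + 1 := by omega
  have hk4 : n + 1 ≤ k := by omega
  -- basic facts about f₁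
  have hf₁0 : f₁ 0 = dV := (dep₁ 0).2 ⟨0, rfl⟩
  have hf₁N : ∀ j, 1 ≤ j → j ≤ n → f₁ j ∈ N := by
    intro j h1 h2
    rcases mem₁ j with h | h
    · exact h
    · exfalso
      have h3 := (dep₁ j).1 h
      have := Nat.le_of_dvd (by omega) h3
      omega
  have inj₁ : ∀ a b, 1 ≤ a → a ≤ n → 1 ≤ b → b ≤ n → f₁ a = f₁ b → a = b := by
    intro a b ha1 ha2 hb1 hb2 hab
    obtain ⟨i, hi, hiu⟩ := honce (f₁ a) (hf₁N a ha1 ha2)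
    have h1 : a = i := hiu a ⟨by omega, rfl⟩
    have h2 : b = i := hiu b ⟨by omega, hab.symm⟩
    omega
  -- the walk f
  set F : ℕ → V := fun r => if r = 0 then dV else f₁ ((r - 1) % n + 1) with hF
  set f : ℕ → V := fun i => F (i % k) with hf
  have hFval : ∀ r, r ≠ 0 → F r = f₁ ((r - 1) % n + 1) := by
    intro r hr
    simp only [hF, if_neg hr]
  have hF0 : F 0 = dV := by simp [hF]
  have hfval : ∀ i, 1 ≤ i → i ≤ k - 1 → f i = f₁ ((i - 1) % n + 1) := by
    intro i h1 h2
    show F (i % k) = _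
    rw [Nat.mod_eq_of_lt (by omega)]
    exact hFval i (by omega)
  have hfNr : ∀ i, i % k ≠ 0 → f i ∈ N := by
    intro i hi
    show F (i % k) ∈ N
    rw [hFval _ hi]
    have := Nat.mod_lt (i % k - 1) (show 0 < n by omega)
    exact hf₁N _ (by omega) (by omega)
  have hfd : ∀ i, i % k = 0 → f i = dV := by
    intro i hi
    show F (i % k) = dV
    rw [hi]
    exact hF0
  have hper : ∀ i, f (i + k) = f i := by
    intro i
    show F ((i + k) % k) = F (i % k)
    rw [Nat.add_mod_right]
  -- crossing values
  have hcrossval : ∀ a m, 1 ≤ a → a ≤ n → m ≤ n + 1 → f (q0 + a + m) = f₁ (a + m) := by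
    intro a m ha1 ha2 hm
    rcases Nat.lt_or_ge (a + m) (n + 1) with h1 | h1
    · -- within the first period of targets
      rw [hfval (q0 + a + m) (by omega) (by omega)]
      have e1 : q0 + a + m - 1 = (a + m - 1) + (p - 1) * n := by omega
      rw [e1, Nat.add_mul_mod_self_right, Nat.mod_eq_of_lt (by omega)]
      congr 1
      omega
    rcases Nat.eq_or_lt_of_le h1 with h2 | h2
    · -- at the depot
      have hik : q0 + a + m = k := by omega
      have hfk : f (q0 + a + m) = dV := hfd _ (by rw [hik]; exact Nat.mod_self k)
      have hf₁am : f₁ (a + m) = dV := by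
        rw [← h2, show n + 1 = 0 + (n + 1) from (Nat.zero_add _).symm, per₁ 0, hf₁0]
      rw [hfk, hf₁am]
    · -- beyond the depot
      have hs1 : 1 ≤ a + m - (n + 1) := by omega
      have hs2 : a + m - (n + 1) ≤ n := by omega
      have hik : q0 + a + m = (a + m - (n + 1)) + k := by omega
      rw [hik, hper, hfval _ hs1 (by omega),
        Nat.mod_eq_of_lt (show a + m - (n + 1) - 1 < n by omega)]
      have e3 : f₁ (a + m) = f₁ (a + m - (n + 1)) := by
        rw [← per₁ (a + m - (n + 1))]
        congr 1
        omega
      rw [e3]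
      congr 1
      omega
  -- the walk property
  have hwalkf : IsPMPDWalkFun N dV k f := by
    refine ⟨hper, ?_, ?_, ?_, ?_⟩
    · -- consecutive visits distinct
      intro i
      have hrlt : i % k < k := Nat.mod_lt _ (by omega)
      have hsucc : (i + 1) % k = (i % k + 1) % k := by
        rw [Nat.add_mod]
        norm_num
      rcases Nat.eq_zero_or_pos (i % k) with h0 | h0
      · have h1 : (i + 1) % k = 1 := by
          rw [hsucc, h0]
          exact Nat.mod_eq_of_lt (by omega)
        show F (i % k) ≠ F ((i + 1) % k)
        rw [h0, h1, hF0, hFval 1 (by omega)]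
        intro hcon
        have hb := Nat.mod_lt (1 - 1) (show 0 < n by omega)
        exact hd (hcon ▸ hf₁N _ (by omega) (by omega))
      rcases Nat.eq_or_lt_of_le (show i % k + 1 ≤ k by omega) with hik1 | hik1
      · -- just before the depot
        have h1 : (i + 1) % k = 0 := by
          rw [hsucc, hik1]
          exact Nat.mod_self k
        show F (i % k) ≠ F ((i + 1) % k)
        rw [h1, hF0, hFval _ (by omega)]
        intro hcon
        have hb := Nat.mod_lt (i % k - 1) (show 0 < n by omega)
        exact hd (hcon ▸ hf₁N _ (by omega) (by omega))
      · -- between targets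
        have h1 : (i + 1) % k = i % k + 1 := by
          rw [hsucc]
          exact Nat.mod_eq_of_lt (by omega)
        show F (i % k) ≠ F ((i + 1) % k)
        rw [h1, hFval _ (by omega), hFval _ (by omega)]
        have hr1 : (i % k + 1 - 1) % n = i % k % n := by norm_num
        rcases Nat.eq_zero_or_pos (i % k % n) with hb | hb
        · -- boundary of the small cycle: f₁ n vs f₁ 1
          obtain ⟨q, hq⟩ := Nat.dvd_of_mod_eq_zero hb
          have hq1 : 1 ≤ q := by
            rcases Nat.eq_zero_or_pos q with rfl | h
            · omega
            · exact h
          have hnq : n * q = n * (q - 1) + n := by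
            cases q with
            | zero => omega
            | succ q' => simp [Nat.mul_succ]
          have h2 : (i % k - 1) % n = n - 1 := by
            rw [show i % k - 1 = (n - 1) + (q - 1) * n from by
              rw [Nat.mul_comm (q-1) n]; omega]
            rw [Nat.add_mul_mod_self_right, Nat.mod_eq_of_lt (by omega)]
          rw [h2, hr1, hb, show n - 1 + 1 = n from by omega]
          simpa using hshort.symm
        · -- interior step
          have hmc : n * (i % k / n) = (i % k / n) * n := Nat.mul_comm _ _
          have hdm := Nat.div_add_mod (i % k) n
          have h2 : (i % k - 1) % n = i % k % n - 1 := by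
            rw [show i % k - 1 = (i % k % n - 1) + (i % k / n) * n from by omega]
            rw [Nat.add_mul_mod_self_right,
              Nat.mod_eq_of_lt (show i % k % n - 1 < n from by
                have := Nat.mod_lt (i % k) (show 0 < n by omega)
                omega)]
          rw [h2, hr1, show i % k % n - 1 + 1 = i % k % n from by omega]
          exact step₁ (i % k % n)
    · -- depot characterisation
      intro i
      constructor
      · intro hcon
        by_contra hnd
        have h0 : i % k ≠ 0 := fun hh => hnd (Nat.dvd_of_mod_eq_zero hh)
        exact hd (hcon ▸ hfNr i h0)
      · intro hdvd
        obtain ⟨q, rfl⟩ := hdvd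
        exact hfd _ (Nat.mul_mod_right _ _)
    · -- membership
      intro i
      rcases Nat.eq_zero_or_pos (i % k) with h0 | h0
      · exact Or.inr (hfd i h0)
      · exact Or.inl (hfNr i (by omega))
    · -- coverage
      intro t ht
      obtain ⟨i, hi, hfi⟩ := cov₁ t ht
      have hi1 : 1 ≤ i := by
        rcases Nat.eq_zero_or_pos i with rfl | hh
        · exfalso
          rw [hf₁0] at hfi
          exact hd (hfi ▸ ht)
        · exact hh
      refine ⟨i, by omega, ?_⟩
      rw [hfval i hi1 (by omega), Nat.mod_eq_of_lt (show i - 1 < n by omega),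
        show i - 1 + 1 = i from by omega]
      exact hfi
  -- the costs
  set T₁ := segCost c f₁ 0 (n + 1) with hT₁def
  set g₂ : ℕ → V := fun j => f₁ (j % n + 1) with hg₂
  have per₂ : ∀ j, g₂ (j + n) = g₂ j := by
    intro j
    simp only [hg₂, Nat.add_mod_right]
  set Tc := segCost c g₂ 0 n with hTcdef
  have hTcT₁ : Tc ≤ T₁ := by
    obtain ⟨n', hn'⟩ : ∃ n', n = n' + 1 := ⟨n - 1, by omega⟩
    have e1 : T₁ = (∑ m ∈ Finset.range n', c (f₁ (m + 1)) (f₁ (m + 1 + 1)))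
        + c (f₁ 0) (f₁ 1) + c (f₁ n) (f₁ (n + 1)) := by
      rw [hT₁def]
      show ∑ m ∈ Finset.range (n + 1 - 0), c (f₁ (0 + m)) (f₁ (0 + m + 1)) = _
      simp only [Nat.sub_zero, Nat.zero_add]
      rw [Finset.sum_range_succ]
      congr 1
      rw [hn', Finset.sum_range_succ']
      try norm_num
    have e2 : Tc = (∑ m ∈ Finset.range n', c (f₁ (m + 1)) (f₁ (m + 1 + 1)))
        + c (f₁ n) (f₁ 1) := by
      rw [hTcdef]
      show ∑ m ∈ Finset.range (n - 0), c (g₂ (0 + m)) (g₂ (0 + m + 1)) = _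
      simp only [Nat.sub_zero, Nat.zero_add]
      rw [hn', Finset.sum_range_succ]
      congr 1
      · refine Finset.sum_congr rfl fun m hm => ?_
        have hm' : m < n' := Finset.mem_range.mp hm
        have ha : g₂ m = f₁ (m + 1) := by
          simp only [hg₂]
          rw [Nat.mod_eq_of_lt (by omega)]
        have hb : g₂ (m + 1) = f₁ (m + 1 + 1) := by
          simp only [hg₂]
          rw [Nat.mod_eq_of_lt (by omega)]
        rw [ha, hb]
      · have ha : g₂ n' = f₁ n := by
          simp only [hg₂]
          rw [Nat.mod_eq_of_lt (by omega)]
          congr 1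
          omega
        have hb : g₂ (n' + 1) = f₁ 1 := by
          simp only [hg₂]
          rw [← hn', Nat.mod_self]
        rw [ha, hb, hn']
    have hdep : f₁ (n + 1) = dV := by
      rw [show n + 1 = 0 + (n + 1) from (Nat.zero_add _).symm, per₁ 0, hf₁0]
    have htr := htri (f₁ n) dV (f₁ 1)
    rw [e1, e2, hf₁0, hdep]
    linarith
  have hcrosscost : ∀ a, 1 ≤ a → a ≤ n →
      segCost c f (q0 + a) (q0 + a + (n + 1)) = T₁ := by
    intro a ha1 ha2
    calc segCost c f (q0 + a) (q0 + a + (n + 1))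
        = ∑ m ∈ Finset.range (n + 1), c (f₁ (a + m)) (f₁ (a + m + 1)) := by
          show ∑ m ∈ Finset.range (q0 + a + (n + 1) - (q0 + a)),
              c (f (q0 + a + m)) (f (q0 + a + m + 1)) = _
          rw [show q0 + a + (n + 1) - (q0 + a) = n + 1 from by omega]
          refine Finset.sum_congr rfl fun m hm => ?_
          have hm' : m < n + 1 := Finset.mem_range.mp hm
          have e1 := hcrossval a m ha1 ha2 (by omega)
          have e2 := hcrossval a (m + 1) ha1 ha2 (by omega)
          rw [e1, show q0 + a + m + 1 = q0 + a + (m + 1) from by omega, e2,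
            show a + (m + 1) = a + m + 1 from by omega]
      _ = segCost c f₁ a (a + (n + 1)) := by
          show _ = ∑ m ∈ Finset.range (a + (n + 1) - a), c (f₁ (a + m)) (f₁ (a + m + 1))
          rw [show a + (n + 1) - a = n + 1 from by omega]
      _ = T₁ := PMPaux.segCost_shift c f₁ per₁ a
  have hcrossrev : ∀ a, 1 ≤ a → a ≤ n → IsRevisit f (q0 + a) (q0 + a + (n + 1)) := by
    intro a ha1 ha2
    have hiv : f (q0 + a) = f₁ a := by
      have := hcrossval a 0 ha1 ha2 (by omega)
      simpa using this
    refine ⟨by omega, ?_, ?_⟩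
    · rw [hiv, hcrossval a (n + 1) ha1 ha2 le_rfl, per₁ a]
    · intro m hm1 hm2 hcon
      rw [hiv] at hcon
      have hfaN : f₁ a ∈ N := hf₁N a ha1 ha2
      -- m is not a depot index
      have hmk : m % k ≠ 0 := by
        intro h0
        rw [hfd m h0] at hcon
        exact hd (hcon ▸ hfaN)
      rcases Nat.lt_or_ge m k with hmlt | hmge
      · -- m in the first period: m ≡ a mod n forces m ≥ k
        have hm1' : 1 ≤ m := by omega
        rw [hfval m hm1' (by omega)] at hcon
        have hb := Nat.mod_lt (m - 1) (show 0 < n by omega)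
        have heq := inj₁ _ _ (by omega) (by omega) ha1 ha2 hcon
        -- (m-1) % n = a - 1
        have hia : (q0 + a - 1) % n = a - 1 := by
          rw [show q0 + a - 1 = (a - 1) + (p - 1) * n from by omega,
            Nat.add_mul_mod_self_right, Nat.mod_eq_of_lt (by omega)]
        have hz : ((m - 1) - (q0 + a - 1)) % n = 0 :=
          Nat.sub_mod_eq_zero_of_mod_eq (by omega)
        have hdvd : n ∣ (m - (q0 + a)) := by
          have : (m - 1) - (q0 + a - 1) = m - (q0 + a) := by omega
          rw [this] at hz
          exact Nat.dvd_of_mod_eq_zero hz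
        have hle := Nat.le_of_dvd (show 0 < m - (q0 + a) from by omega) hdvd
        omega
      · -- m after the depot
        have hmne : m ≠ k := by
          intro hmk'
          exact hmk (by rw [hmk']; exact Nat.mod_self k)
        set s' := m - k with hs'
        have hm' : m = s' + k := by omega
        have hs1 : 1 ≤ s' := by omega
        have hfm : f m = f₁ s' := by
          rw [hm', hper, hfval s' hs1 (by omega),
            Nat.mod_eq_of_lt (show s' - 1 < n from by omega),
            show s' - 1 + 1 = s' from by omega]
        rw [hfm] at hcon
        have := inj₁ _ _ hs1 (by omega) ha1 ha2 hcon
        omega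
  -- IsGreatest for f
  have hGf : IsGreatest (revCosts c N k f) T₁ := by
    constructor
    · -- membership: the crossing revisit with terminus f₁ 1
      refine ⟨q0 + 1, q0 + 1 + (n + 1), by omega, ?_, hcrossrev 1 (by omega) (by omega),
        ?_, (hcrosscost 1 (by omega) (by omega)).symm⟩
      · have := hcrossval 1 0 (by omega) (by omega) (by omega)
        simp only [Nat.add_zero] at this
        rw [this]
        exact hf₁N 1 (by omega) (by omega)
      · intro t ht
        obtain ⟨b, hb, hfb⟩ := cov₁ t ht
        have hb1 : 1 ≤ b := by
          rcases Nat.eq_zero_or_pos b with rfl | hh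
          · exfalso
            rw [hf₁0] at hfb
            exact hd (hfb ▸ ht)
          · exact hh
        refine ⟨q0 + 1 + (b - 1), by omega, by omega, ?_⟩
        rw [hcrossval 1 (b - 1) (by omega) (by omega) (by omega),
          show 1 + (b - 1) = b from by omega]
        exact hfb
    · -- upper bound
      rintro x ⟨i, j, hik, hiN, ⟨hij, hji, hbet⟩, hspan, rfl⟩
      have hi0 : i % k ≠ 0 := by
        intro h0
        rw [hfd i h0] at hiN
        exact hd hiN
      have hi1 : 1 ≤ i := by
        have : i ≠ 0 := by
          intro h0
          exact hi0 (by rw [h0]; exact Nat.zero_mod k)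
        omega
      obtain ⟨a, hadef, ha1, ha2⟩ : ∃ a, a = (i - 1) % n + 1 ∧ 1 ≤ a ∧ a ≤ n := by
        refine ⟨(i - 1) % n + 1, rfl, by omega, ?_⟩
        have := Nat.mod_lt (i - 1) (show 0 < n by omega)
        omega
      have hfi : f i = f₁ a := by
        rw [hfval i hi1 (by omega), ← hadef]
      rcases le_or_gt (i + n) (k - 1) with hc | hc
      · -- non-crossing revisit: cost Tc
        have hocc : f (i + n) = f i := by
          rw [hfval (i + n) (by omega) (by omega), hfval i hi1 (by omega)]
          congr 2
          rw [show i + n - 1 = (i - 1) + n from by omega, Nat.add_mod_right]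
        have hbetween : ∀ m, i < m → m < i + n → f m ≠ f i := by
          intro m h1 h2 hcon
          rw [hfval m (by omega) (by omega), hfi] at hcon
          have hbm := Nat.mod_lt (m - 1) (show 0 < n by omega)
          have heq := inj₁ _ _ (by omega) (by omega) ha1 ha2 hcon
          have hz := Nat.sub_mod_eq_zero_of_mod_eq
            (show (m - 1) % n = (i - 1) % n from by omega)
          have hdvd : n ∣ (m - i) := by
            rw [show (m - 1) - (i - 1) = m - i from by omega] at hz
            exact Nat.dvd_of_mod_eq_zero hz
          have := Nat.le_of_dvd (by omega) hdvd
          omega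
        have jeq : j = i + n := by
          rcases lt_trichotomy j (i + n) with hh | hh | hh
          · exact absurd hji (hbetween j hij hh)
          · exact hh
          · exact absurd hocc (hbet (i + n) (by omega) hh)
        have hcost : segCost c f i j = Tc := by
          rw [jeq]
          calc segCost c f i (i + n)
              = segCost c g₂ (i - 1) ((i - 1) + n) := by
                show ∑ m ∈ Finset.range (i + n - i), c (f (i + m)) (f (i + m + 1))
                  = ∑ m ∈ Finset.range ((i - 1) + n - (i - 1)), c (g₂ (i - 1 + m)) (g₂ (i - 1 + m + 1))
                rw [show i + n - i = n from by omega, show (i - 1) + n - (i - 1) = n from by omega]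
                refine Finset.sum_congr rfl fun m hm => ?_
                have hm' : m < n := Finset.mem_range.mp hm
                have e1 : f (i + m) = g₂ (i - 1 + m) := by
                  rw [hfval (i + m) (by omega) (by omega)]
                  simp only [hg₂]
                  congr 3
                  omega
                have e2 : f (i + m + 1) = g₂ (i - 1 + m + 1) := by
                  rw [hfval (i + m + 1) (by omega) (by omega)]
                  simp only [hg₂]
                  congr 3
                  omega
                rw [e1, e2]
            _ = Tc := by
                rw [hTcdef]
                exact PMPaux.segCost_shift c g₂ per₂ (i - 1)
        rw [hcost]
        exact hTcT₁
      · -- crossing revisit: cost T₁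
        have hq0i : q0 + 1 ≤ i := by omega
        obtain ⟨i0, hi0eq, hi0lt⟩ : ∃ i0, i - 1 = i0 + (p - 1) * n ∧ i0 < n :=
          ⟨i - 1 - q0, by omega, by omega⟩
        have hd2 : (i - 1) % n = i0 := by
          rw [hi0eq, Nat.add_mul_mod_self_right, Nat.mod_eq_of_lt hi0lt]
        have hia : i = q0 + a := by omega
        obtain ⟨_, hocc', hbet'⟩ := hcrossrev a ha1 ha2
        rw [← hia] at hocc' hbet'
        have jeq : j = i + (n + 1) := by
          rcases lt_trichotomy j (i + (n + 1)) with hh | hh | hh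
          · exact absurd hji (hbet' j hij hh)
          · exact hh
          · exact absurd hocc' (hbet (i + (n + 1)) (by omega) hh)
        have hcost : segCost c f i j = T₁ := by
          rw [jeq, hia]
          exact hcrosscost a ha1 ha2
        exact le_of_eq hcost
  -- identify RD (n+1)
  have hsg₁ := PMPaux.simple_greatest c hd (show 0 < n by omega) hf₁ honce
  have hT₁RD : RD (n + 1) = T₁ := hopt.unique hsg₁
  have hup : RD k ≤ RD (n + 1) := hRDk.2 ⟨f, hwalkf, hT₁RD ▸ hGf⟩
  obtain ⟨g, hgw, hgG⟩ := hRDk.1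
  obtain ⟨h, hhw, hhonce, hhle⟩ :=
    PMPaux.exists_small_walk c hd (show 1 ≤ n by omega) hncard.symm htri hk4 hgw hgG
  have hlow : RD (n + 1) ≤ RD k :=
    le_trans (hRD1.2 ⟨h, hhw, PMPaux.simple_greatest c hd (by omega) hhw hhonce⟩) hhle
  exact ⟨⟨f, hfval, hwalkf, hT₁RD ▸ hGf⟩, le_antisymm hup hlow⟩
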